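/- There is a constant c > 0 such that for all ρ > 0, all v in the fractional Sobolev space H^{1/2}((0,ρ)), and all real numbers a, b, one has c·ρ²·a² ≤ |a|·∫₀^ρ |v(y) − a·y − b| dy + [v]²_{H^{1/2}((0,ρ))}, where [v]_{H^{1/2}((0,ρ))} denotes the H^{1/2}-seminorm of v. -/

import Mathlib

open MeasureTheory

/-- The squared `H^{1/2}`-seminorm of `v` on `(0,ρ)`, defined as the infimum of the
Dirichlet energy over all extensions `w` to the half-strip `(-∞,0) × (0,ρ)` which are
differentiable in the open half-strip and attain the boundary values `v` continuously. -/
noncomputable def H12sq (ρ : ℝ) (v : ℝ → ℝ) : ENNReal :=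
  ⨅ (w : ℝ × ℝ → ℝ) (_ : ContinuousOn w (Set.Iic (0 : ℝ) ×ˢ Set.Ioo 0 ρ))
    (_ : DifferentiableOn ℝ w (Set.Iio (0 : ℝ) ×ˢ Set.Ioo 0 ρ))
    (_ : ∀ y ∈ Set.Ioo (0 : ℝ) ρ, w (0, y) = v y),
    ∫⁻ x in Set.Iio (0 : ℝ) ×ˢ Set.Ioo 0 ρ, ENNReal.ofReal (‖fderiv ℝ w x‖ ^ 2)

open Set in
set_option maxHeartbeats 2000000 in
/-- The core estimate: for any admissible extension `w`, the Dirichlet energy bounds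
`c ρ² a² - |a| ∫ |v - ay - b|` from above.  -/
private lemma h12_core (ρ : ℝ) (hρ : 0 < ρ) (a b : ℝ) (v : ℝ → ℝ) (w : ℝ × ℝ → ℝ)
    (hcont : ContinuousOn w (Set.Iic (0:ℝ) ×ˢ Set.Ioo 0 ρ))
    (hdiff : DifferentiableOn ℝ w (Set.Iio (0:ℝ) ×ˢ Set.Ioo 0 ρ))
    (hbv : ∀ y ∈ Set.Ioo (0:ℝ) ρ, w (0, y) = v y) :
    ENNReal.ofReal (1/4096 * ρ^2 * a^2 - |a| * ∫ y in Set.Ioo (0:ℝ) ρ, |v y - a * y - b|)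
      ≤ ∫⁻ x in Set.Iio (0:ℝ) ×ˢ Set.Ioo 0 ρ, ENNReal.ofReal (‖fderiv ℝ w x‖ ^ 2) := by
  by_cases ha0 : a = 0
  · simp [ha0]
  by_cases hEtop : (∫⁻ x in Set.Iio (0:ℝ) ×ˢ Set.Ioo 0 ρ, ENNReal.ofReal (‖fderiv ℝ w x‖ ^ 2)) = ⊤
  · rw [hEtop]; exact le_top
  set S : Set (ℝ×ℝ) := Set.Iio (0:ℝ) ×ˢ Set.Ioo 0 ρ with hSdef
  set h : ℝ × ℝ → ℝ := fun x => ‖fderiv ℝ w x‖ with hhdef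
  set Etot := ∫⁻ x in S, ENNReal.ofReal (h x ^ 2) with hEdef
  have hEtop' : Etot ≠ ⊤ := hEtop
  set E := Etot.toReal with hEdef'
  have hE0 : 0 ≤ E := ENNReal.toReal_nonneg
  have hh_meas : Measurable h := (measurable_fderiv ℝ w).norm
  have hSopen : IsOpen S := isOpen_Iio.prod isOpen_Ioo
  have hdiffat : ∀ p ∈ S, DifferentiableAt ℝ w p :=
    fun p hp => (hdiff p hp).differentiableAt (hSopen.mem_nhds hp)
  -- integrability of h^2 on S
  have hsqm : AEStronglyMeasurable (fun x => h x ^ 2) ((volume : Measure (ℝ×ℝ)).restrict S) :=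
    ((hh_meas.pow_const 2).aestronglyMeasurable)
  have hsq_int : IntegrableOn (fun x => h x ^ 2) S := by
    refine ⟨hsqm, ?_⟩
    rw [hasFiniteIntegral_iff_ofReal (Filter.Eventually.of_forall fun x => sq_nonneg _)]
    exact hEtop'.lt_top
  have hEeq : ∫ x in S, h x ^ 2 = E := by
    rw [MeasureTheory.integral_eq_lintegral_of_nonneg_ae
      (Filter.Eventually.of_forall fun x => sq_nonneg _) hsqm]
  -- slice function
  set Sl : ℝ → ENNReal := fun t => ∫⁻ y in Set.Ioo (0:ℝ) ρ, ENNReal.ofReal (h (t,y) ^ 2) with hSldef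
  have hof_meas : Measurable (fun p : ℝ×ℝ => ENNReal.ofReal (h p ^ 2)) :=
    (hh_meas.pow_const 2).ennreal_ofReal
  have hSl_meas : Measurable Sl := hof_meas.lintegral_prod_right'
  have hfub : ∫⁻ t in Set.Ioo (-ρ) (0:ℝ), Sl t ≤ Etot := by
    have h1 : (volume : Measure (ℝ×ℝ)).restrict (Set.Ioo (-ρ) (0:ℝ) ×ˢ Set.Ioo (0:ℝ) ρ)
        = ((volume : Measure ℝ).restrict (Set.Ioo (-ρ) 0)).prod
          ((volume : Measure ℝ).restrict (Set.Ioo 0 ρ)) := by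
      rw [MeasureTheory.Measure.volume_eq_prod, Measure.prod_restrict]
    have h2 : ∫⁻ x in (Set.Ioo (-ρ) (0:ℝ) ×ˢ Set.Ioo (0:ℝ) ρ), ENNReal.ofReal (h x ^2) ≤ Etot := by
      refine lintegral_mono' (Measure.restrict_mono ?_ le_rfl) le_rfl
      exact Set.prod_mono Ioo_subset_Iio_self subset_rfl
    calc ∫⁻ t in Set.Ioo (-ρ) 0, Sl t
        = ∫⁻ x in (Set.Ioo (-ρ) (0:ℝ) ×ˢ Set.Ioo (0:ℝ) ρ), ENNReal.ofReal (h x ^2) := by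
          rw [h1, lintegral_prod _ hof_meas.aemeasurable]
      _ ≤ Etot := h2
  -- pick a good slice
  have hx₁ : ∃ x₁ ∈ Set.Ioo (-ρ) (0:ℝ), Sl x₁ ≤ 2 * Etot / ENNReal.ofReal ρ := by
    by_cases hE0' : Etot = 0
    · have hz : ∫⁻ t in Set.Ioo (-ρ) 0, Sl t = 0 := le_antisymm (hfub.trans (by simp [hE0'])) (zero_le)
      have hae : ∀ᵐ t ∂((volume : Measure ℝ).restrict (Set.Ioo (-ρ) 0)), Sl t = 0 :=
        (lintegral_eq_zero_iff hSl_meas).mp hz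
      have hne : ((volume : Measure ℝ).restrict (Set.Ioo (-ρ) 0)) ≠ 0 := by
        refine fun hcontra => ?_
        have := congrArg (fun μ => μ (Set.Ioo (-ρ) (0:ℝ))) hcontra
        simp only [Measure.restrict_apply_self, Measure.coe_zero, Pi.zero_apply,
          Real.volume_Ioo] at this
        rw [ENNReal.ofReal_eq_zero] at this
        linarith
      have : ∀ᵐ t ∂((volume : Measure ℝ).restrict (Set.Ioo (-ρ) 0)),
          t ∈ Set.Ioo (-ρ) (0:ℝ) ∧ Sl t = 0 :=
        (ae_restrict_mem measurableSet_Ioo).and hae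
      have hnb : (ae ((volume : Measure ℝ).restrict (Set.Ioo (-ρ) 0))).NeBot := ae_neBot.mpr hne
      obtain ⟨t, ht, hts⟩ := this.exists
      exact ⟨t, ht, by simp [hts]⟩
    · by_contra hno
      push_neg at hno
      have hlow : ∀ t ∈ Set.Ioo (-ρ) (0:ℝ), 2 * Etot / ENNReal.ofReal ρ ≤ Sl t :=
        fun t ht => (hno t ht).le
      have : 2 * Etot / ENNReal.ofReal ρ * ENNReal.ofReal ρ ≤ ∫⁻ t in Set.Ioo (-ρ) 0, Sl t := by
        calc 2 * Etot / ENNReal.ofReal ρ * ENNReal.ofReal ρ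
            = ∫⁻ _ in Set.Ioo (-ρ) (0:ℝ), (2 * Etot / ENNReal.ofReal ρ) := by
              rw [setLIntegral_const, Real.volume_Ioo]; norm_num
          _ ≤ ∫⁻ t in Set.Ioo (-ρ) 0, Sl t := by
              refine setLIntegral_mono hSl_meas hlow
      rw [ENNReal.div_mul_cancel (by positivity) ENNReal.ofReal_ne_top] at this
      have h2E : 2 * Etot ≤ Etot := this.trans hfub
      have : Etot < 2 * Etot := by
        rw [two_mul]
        exact ENNReal.lt_add_right hEtop' hE0'
      exact absurd h2E (not_le.mpr this)
  obtain ⟨x₁, hx₁mem, hx₁⟩ := hx₁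
  have hx₁neg : x₁ < 0 := hx₁mem.2
  have hx₁lb : -ρ < x₁ := hx₁mem.1
  -- the good slice bound in real terms
  have hSlfin : Sl x₁ ≠ ⊤ := by
    refine ne_top_of_le_ne_top ?_ hx₁
    exact (ENNReal.div_lt_top (by finiteness) (by positivity)).ne
  set e₁ := (Sl x₁).toReal with he₁def
  have he₁ : e₁ ≤ 2 * E / ρ := by
    have := ENNReal.toReal_mono (ENNReal.div_lt_top (by finiteness) (by positivity)).ne hx₁
    rwa [ENNReal.toReal_div, ENNReal.toReal_mul, ENNReal.toReal_ofNat,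
      ENNReal.toReal_ofReal hρ.le] at this
  have he₁0 : 0 ≤ e₁ := ENNReal.toReal_nonneg
  -- the slice function g
  set g : ℝ → ℝ := fun y => w (x₁, y) with hgdef
  have hmemS : ∀ y ∈ Set.Ioo (0:ℝ) ρ, (x₁, y) ∈ S := fun y hy => ⟨hx₁neg, hy⟩
  have hgderiv : ∀ y ∈ Set.Ioo (0:ℝ) ρ, HasDerivAt g (fderiv ℝ w (x₁, y) (0, 1)) y := by
    intro y hy
    have hline : HasDerivAt (fun y : ℝ => (x₁, y)) ((0:ℝ), (1:ℝ)) y :=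
      (hasDerivAt_const y x₁).prodMk (hasDerivAt_id y)
    exact ((hdiffat _ (hmemS y hy)).hasFDerivAt).comp_hasDerivAt y hline
  have hgdiff : ∀ y ∈ Set.Ioo (0:ℝ) ρ, DifferentiableAt ℝ g y :=
    fun y hy => (hgderiv y hy).differentiableAt
  have hnorm01 : ‖((0:ℝ), (1:ℝ))‖ = 1 := by
    simp [Prod.norm_def]
  have hg'bound : ∀ y ∈ Set.Ioo (0:ℝ) ρ, |deriv g y| ≤ h (x₁, y) := by
    intro y hy
    rw [(hgderiv y hy).deriv]
    calc |fderiv ℝ w (x₁, y) (0, 1)| = ‖fderiv ℝ w (x₁, y) ((0:ℝ), (1:ℝ))‖ := rfl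
      _ ≤ ‖fderiv ℝ w (x₁, y)‖ * ‖((0:ℝ),(1:ℝ))‖ := ContinuousLinearMap.le_opNorm _ _
      _ = h (x₁, y) := by rw [hnorm01, mul_one]
  -- integrability of the slice energy
  have hslice_meas : Measurable (fun y => h (x₁, y) ^ 2) :=
    (hh_meas.comp (measurable_const.prodMk measurable_id)).pow_const 2
  have hslice_int : IntegrableOn (fun y => h (x₁, y) ^ 2) (Set.Ioo (0:ℝ) ρ) := by
    refine ⟨hslice_meas.aestronglyMeasurable, ?_⟩
    rw [hasFiniteIntegral_iff_ofReal (Filter.Eventually.of_forall fun x => sq_nonneg _)]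
    exact hSlfin.lt_top
  have hslice_eq : ∫ y in Set.Ioo (0:ℝ) ρ, h (x₁, y) ^ 2 = e₁ := by
    rw [MeasureTheory.integral_eq_lintegral_of_nonneg_ae
      (Filter.Eventually.of_forall fun x => sq_nonneg _) hslice_meas.aestronglyMeasurable]
  -- epsilon and the oscillation bound K
  set A := |a| with hAdef
  have hA : 0 < A := abs_pos.mpr ha0
  set ε := A / 34 with hεdef
  have hε : 0 < ε := by positivity
  have amgm : ∀ x : ℝ, |x| ≤ ε/2 + x^2/(2*ε) := by
    intro x
    have h2 : ε/2 + x^2/(2*ε) = (ε^2 + x^2)/(2*ε) := by field_simp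
    rw [h2, le_div_iff₀ (by positivity)]
    nlinarith [sq_nonneg (|x| - ε), sq_abs x]
  -- integrability and integral bound for |deriv g| on (0, ρ)
  set K := ε*ρ/2 + e₁/(2*ε) with hKdef
  have hmaj_int : IntegrableOn (fun y => ε/2 + h (x₁, y)^2/(2*ε)) (Set.Ioo (0:ℝ) ρ) := by
    refine ((integrableOn_const_iff).mpr (Or.inr ?_)).add (hslice_int.div_const _)
    simp [Real.volume_Ioo]
  have hg'_int : IntegrableOn (fun y => deriv g y) (Set.Ioo (0:ℝ) ρ) := by
    refine Integrable.mono' hmaj_int ((measurable_deriv g).aestronglyMeasurable) ?_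
    refine (ae_restrict_iff' measurableSet_Ioo).mpr (Filter.Eventually.of_forall fun y hy => ?_)
    calc ‖deriv g y‖ = |deriv g y| := rfl
      _ ≤ h (x₁, y) := hg'bound y hy
      _ = |h (x₁, y)| := (abs_of_nonneg (norm_nonneg _)).symm
      _ ≤ ε/2 + h (x₁, y)^2/(2*ε) := amgm _
  have hKbound : ∫ y in Set.Ioo (0:ℝ) ρ, |deriv g y| ≤ K := by
    have step : ∫ y in Set.Ioo (0:ℝ) ρ, |deriv g y|
        ≤ ∫ y in Set.Ioo (0:ℝ) ρ, (ε/2 + h (x₁, y)^2/(2*ε)) := by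
      refine setIntegral_mono_on hg'_int.abs hmaj_int measurableSet_Ioo fun y hy => ?_
      calc |deriv g y| ≤ h (x₁, y) := hg'bound y hy
        _ = |h (x₁, y)| := (abs_of_nonneg (norm_nonneg _)).symm
        _ ≤ ε/2 + h (x₁, y)^2/(2*ε) := amgm _
    have hsplit : ∫ y in Set.Ioo (0:ℝ) ρ, (ε/2 + h (x₁, y)^2/(2*ε))
        = ε/2 * ρ + e₁/(2*ε) := by
      rw [integral_add ((integrableOn_const_iff (C := ε/2)).mpr (Or.inr (by simp [Real.volume_Ioo]))) (hslice_int.div_const _)]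
      rw [setIntegral_const, measureReal_def, integral_div, hslice_eq, Real.volume_Ioo,
        ENNReal.toReal_ofReal (by linarith), smul_eq_mul, sub_zero, mul_comm]
    rw [hsplit] at step
    calc ∫ y in Set.Ioo (0:ℝ) ρ, |deriv g y| ≤ ε/2 * ρ + e₁/(2*ε) := step
      _ = K := by rw [hKdef]; ring
  have hK0 : 0 ≤ K := by
    have : 0 ≤ ∫ y in Set.Ioo (0:ℝ) ρ, |deriv g y| := integral_nonneg fun y => abs_nonneg _
    linarith
  -- oscillation bound for g
  have hosc : ∀ y₁ ∈ Set.Ioo (0:ℝ) ρ, ∀ y₂ ∈ Set.Ioo (0:ℝ) ρ, y₁ ≤ y₂ → |g y₂ - g y₁| ≤ K := by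
    intro y₁ hy₁ y₂ hy₂ h12
    have hsub : Set.uIcc y₁ y₂ ⊆ Set.Ioo (0:ℝ) ρ := by
      rw [Set.uIcc_of_le h12]
      exact fun t ht => ⟨lt_of_lt_of_le hy₁.1 ht.1, lt_of_le_of_lt ht.2 hy₂.2⟩
    have hint : IntervalIntegrable (deriv g) volume y₁ y₂ := by
      rw [intervalIntegrable_iff_integrableOn_Ioo_of_le h12]
      exact hg'_int.mono_set fun t ht => hsub (by rw [Set.uIcc_of_le h12]; exact ⟨ht.1.le, ht.2.le⟩)
    have hftc : ∫ t in y₁..y₂, deriv g t = g y₂ - g y₁ :=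
      intervalIntegral.integral_eq_sub_of_hasDerivAt
        (fun t ht => (hgdiff t (hsub ht)).hasDerivAt) hint
    rw [← hftc]
    calc |∫ t in y₁..y₂, deriv g t| ≤ ∫ t in y₁..y₂, |deriv g t| :=
        intervalIntegral.abs_integral_le_integral_abs h12
      _ = ∫ t in Set.Ioo y₁ y₂, |deriv g t| := by
          rw [intervalIntegral.integral_of_le h12, integral_Ioc_eq_integral_Ioo]
      _ ≤ ∫ t in Set.Ioo (0:ℝ) ρ, |deriv g t| := by
          refine setIntegral_mono_set hg'_int.abs
            (Filter.Eventually.of_forall fun t => abs_nonneg _) (HasSubset.Subset.eventuallyLE ?_)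
          exact fun t ht => ⟨lt_trans hy₁.1 ht.1, lt_of_le_of_lt ht.2.le hy₂.2⟩
      _ ≤ K := hKbound
  -- the rectangle R
  set R : Set (ℝ×ℝ) := Set.Ioo x₁ (0:ℝ) ×ˢ Set.Ioo (0:ℝ) ρ with hRdef
  have hRsub : R ⊆ S := Set.prod_mono Set.Ioo_subset_Iio_self subset_rfl
  have hRvol : (volume : Measure (ℝ×ℝ)) R = ENNReal.ofReal (0 - x₁) * ENNReal.ofReal ρ := by
    rw [hRdef, MeasureTheory.Measure.volume_eq_prod, Measure.prod_prod, Real.volume_Ioo,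
      Real.volume_Ioo, sub_zero]
  have hRvol_fin : (volume : Measure (ℝ×ℝ)) R < ⊤ := by
    rw [hRvol]; finiteness
  have hsq_int_R : IntegrableOn (fun x => h x ^ 2) R := hsq_int.mono_set hRsub
  have hsq_R_le : ∫ x in R, h x ^ 2 ≤ E := by
    rw [← hEeq]
    exact setIntegral_mono_set hsq_int (Filter.Eventually.of_forall fun x => sq_nonneg _)
      (HasSubset.Subset.eventuallyLE hRsub)
  have hsq_R_nonneg : 0 ≤ ∫ x in R, h x ^ 2 := integral_nonneg fun x => sq_nonneg _
  -- integrability of h on R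
  have hmaj_int_R : IntegrableOn (fun x => ε/2 + h x ^2/(2*ε)) R := by
    refine Integrable.add ?_ (hsq_int_R.div_const (2*ε))
    exact (integrableOn_const_iff (C := ε/2)).mpr (Or.inr hRvol_fin)
  have h_int_R : IntegrableOn h R := by
    refine Integrable.mono' hmaj_int_R hh_meas.aestronglyMeasurable ?_
    refine Filter.Eventually.of_forall fun x => ?_
    calc ‖h x‖ = |h x| := rfl
      _ ≤ ε/2 + h x ^2/(2*ε) := amgm _
  -- bound on ∫_R h
  have hIR : ∫ x in R, h x ≤ ε/2 * ρ^2 + E/(2*ε) := by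
    have hRmeas : MeasurableSet R := measurableSet_Ioo.prod measurableSet_Ioo
    have step : ∫ x in R, h x ≤ ∫ x in R, (ε/2 + h x ^2/(2*ε)) := by
      refine setIntegral_mono_on h_int_R hmaj_int_R
        hRmeas fun x _ => le_trans (le_abs_self _) (amgm _)
    have hsplit : ∫ x in R, (ε/2 + h x ^2/(2*ε))
        = ε/2 * ((volume : Measure (ℝ×ℝ)) R).toReal + (∫ x in R, h x ^2)/(2*ε) := by
      rw [integral_add ((integrableOn_const_iff (C := ε/2)).mpr (Or.inr hRvol_fin)) (hsq_int_R.div_const (2*ε)),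
        setIntegral_const, measureReal_def, integral_div, smul_eq_mul, mul_comm]
    have hvolR : ((volume : Measure (ℝ×ℝ)) R).toReal ≤ ρ^2 := by
      rw [hRvol, ENNReal.toReal_mul, ENNReal.toReal_ofReal (by linarith),
        ENNReal.toReal_ofReal hρ.le]
      nlinarith [hx₁lb, hx₁neg]
    calc ∫ x in R, h x ≤ ∫ x in R, (ε/2 + h x ^2/(2*ε)) := step
      _ = ε/2 * ((volume : Measure (ℝ×ℝ)) R).toReal + (∫ x in R, h x ^2)/(2*ε) := hsplit
      _ ≤ ε/2 * ρ^2 + E/(2*ε) := by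
        gcongr
  -- Fubini setup on R
  have hprodR : (volume : Measure (ℝ×ℝ)).restrict R
      = ((volume : Measure ℝ).restrict (Set.Ioo x₁ 0)).prod
        ((volume : Measure ℝ).restrict (Set.Ioo 0 ρ)) := by
    rw [hRdef, MeasureTheory.Measure.volume_eq_prod, Measure.prod_restrict]
  have h_int_prod : Integrable h
      (((volume : Measure ℝ).restrict (Set.Ioo x₁ 0)).prod
        ((volume : Measure ℝ).restrict (Set.Ioo 0 ρ))) := by
    rw [← hprodR]; exact h_int_R
  have hae_slice : ∀ᵐ y ∂((volume : Measure ℝ).restrict (Set.Ioo 0 ρ)),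
      Integrable (fun t => h (t, y)) ((volume : Measure ℝ).restrict (Set.Ioo x₁ 0)) :=
    h_int_prod.prod_left_ae
  have hswap : ∫ x in R, h x
      = ∫ y in Set.Ioo (0:ℝ) ρ, ∫ t in Set.Ioo x₁ (0:ℝ), h (t, y) := by
    rw [hprodR]
    exact integral_prod_symm h h_int_prod
  -- slice integral function is integrable
  have hslice_fn_int : IntegrableOn (fun y => ∫ t in Set.Ioo x₁ (0:ℝ), h (t, y))
      (Set.Ioo (0:ℝ) ρ) := by
    have := h_int_prod.integral_norm_prod_right
    refine this.congr ?_
    refine Filter.Eventually.of_forall fun y => ?_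
    simp only [Real.norm_eq_abs]
    exact integral_congr_ae (Filter.Eventually.of_forall fun t => abs_of_nonneg (norm_nonneg _))
  have hslice_fn_nonneg : ∀ y, 0 ≤ ∫ t in Set.Ioo x₁ (0:ℝ), h (t, y) :=
    fun y => integral_nonneg fun t => norm_nonneg _
  -- FTC in the horizontal direction
  have hvg_ae : ∀ᵐ y ∂((volume : Measure ℝ).restrict (Set.Ioo 0 ρ)),
      |v y - g y| ≤ ∫ t in Set.Ioo x₁ (0:ℝ), h (t, y) := by
    filter_upwards [hae_slice, ae_restrict_mem measurableSet_Ioo] with y hyint hy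
    set d : ℝ → ℝ := fun t => fderiv ℝ w (t, y) (1, 0) with hddef
    have hd_meas : Measurable d :=
      (measurable_fderiv_apply_const ℝ w ((1:ℝ),(0:ℝ))).comp
        (measurable_id.prodMk measurable_const)
    have hd_bound : ∀ t, |d t| ≤ h (t, y) := by
      intro t
      have h10 : ‖((1:ℝ), (0:ℝ))‖ = 1 := by simp [Prod.norm_def]
      calc |d t| = ‖fderiv ℝ w (t, y) ((1:ℝ),(0:ℝ))‖ := rfl
        _ ≤ ‖fderiv ℝ w (t, y)‖ * ‖((1:ℝ),(0:ℝ))‖ := ContinuousLinearMap.le_opNorm _ _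
        _ = h (t, y) := by rw [h10, mul_one]
    have hd_int : IntegrableOn d (Set.Ioo x₁ (0:ℝ)) := by
      refine Integrable.mono' hyint hd_meas.aestronglyMeasurable ?_
      exact Filter.Eventually.of_forall fun t => hd_bound t
    have hd_ii : IntervalIntegrable d volume x₁ 0 := by
      rw [intervalIntegrable_iff_integrableOn_Ioo_of_le hx₁neg.le]
      exact hd_int
    have hφcont : ContinuousOn (fun t => w (t, y)) (Set.Icc x₁ 0) := by
      refine hcont.comp (Continuous.continuousOn (by continuity)) ?_
      intro t ht
      exact ⟨ht.2, hy⟩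
    have hφderiv : ∀ t ∈ Set.Ioo x₁ (0:ℝ), HasDerivWithinAt (fun t => w (t, y)) (d t) (Set.Ioi t) t := by
      intro t ht
      have hline : HasDerivAt (fun t : ℝ => (t, y)) ((1:ℝ), (0:ℝ)) t :=
        (hasDerivAt_id t).prodMk (hasDerivAt_const t y)
      have : HasDerivAt (fun t => w (t, y)) (d t) t :=
        ((hdiffat (t, y) ⟨ht.2, hy⟩).hasFDerivAt).comp_hasDerivAt t hline
      exact this.hasDerivWithinAt
    have hftc : ∫ t in x₁..0, d t = w (0, y) - w (x₁, y) :=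
      intervalIntegral.integral_eq_sub_of_hasDeriv_right_of_le hx₁neg.le hφcont hφderiv hd_ii
    have habs : |v y - g y| ≤ ∫ t in x₁..0, |d t| := by
      rw [← hbv y hy]
      calc |w (0, y) - w (x₁, y)| = |∫ t in x₁..0, d t| := by rw [hftc]
        _ ≤ ∫ t in x₁..0, |d t| := intervalIntegral.abs_integral_le_integral_abs hx₁neg.le
    calc |v y - g y| ≤ ∫ t in x₁..0, |d t| := habs
      _ = ∫ t in Set.Ioo x₁ (0:ℝ), |d t| := by
          rw [intervalIntegral.integral_of_le hx₁neg.le, integral_Ioc_eq_integral_Ioo]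
      _ ≤ ∫ t in Set.Ioo x₁ (0:ℝ), h (t, y) := by
          refine setIntegral_mono_on hd_int.abs hyint measurableSet_Ioo fun t _ => hd_bound t
  -- continuity of v and g on (0, ρ)
  have hgcont : ContinuousOn g (Set.Ioo (0:ℝ) ρ) :=
    fun y hy => ((hgdiff y hy).continuousAt).continuousWithinAt
  have hvcont : ContinuousOn v (Set.Ioo (0:ℝ) ρ) := by
    have h0 : ContinuousOn (fun y => w (0, y)) (Set.Ioo (0:ℝ) ρ) := by
      refine hcont.comp (Continuous.continuousOn (by continuity)) ?_
      exact fun y hy => ⟨Set.mem_Iic.mpr le_rfl, hy⟩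
    exact h0.congr fun y hy => (hbv y hy).symm
  -- boundedness of g
  have hρ2 : ρ/2 ∈ Set.Ioo (0:ℝ) ρ := ⟨by linarith, by linarith⟩
  have hgbdd : ∀ y ∈ Set.Ioo (0:ℝ) ρ, |g y| ≤ |g (ρ/2)| + K := by
    intro y hy
    rcases le_total y (ρ/2) with hle | hle
    · have := hosc y hy (ρ/2) hρ2 hle
      calc |g y| = |g (ρ/2) - (g (ρ/2) - g y)| := by ring_nf
        _ ≤ |g (ρ/2)| + |g (ρ/2) - g y| := abs_sub _ _
        _ ≤ |g (ρ/2)| + K := by linarith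
    · have := hosc (ρ/2) hρ2 y hy hle
      calc |g y| = |g (ρ/2) + (g y - g (ρ/2))| := by ring_nf
        _ ≤ |g (ρ/2)| + |g y - g (ρ/2)| := abs_add_le _ _
        _ ≤ |g (ρ/2)| + K := by linarith
  set Cg := |g (ρ/2)| + K + (A*ρ + |b|) with hCgdef
  have hGbdd : ∀ y ∈ Set.Ioo (0:ℝ) ρ, |g y - (a*y + b)| ≤ Cg := by
    intro y hy
    have hl : |a*y + b| ≤ A*ρ + |b| := by
      calc |a*y + b| ≤ |a*y| + |b| := abs_add_le _ _
        _ = A * |y| + |b| := by rw [abs_mul]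
        _ ≤ A*ρ + |b| := by
            have : |y| ≤ ρ := by rw [abs_of_nonneg hy.1.le]; exact hy.2.le
            nlinarith
    calc |g y - (a*y + b)| ≤ |g y| + |a*y + b| := abs_sub _ _
      _ ≤ (|g (ρ/2)| + K) + (A*ρ + |b|) := add_le_add (hgbdd y hy) hl
      _ = Cg := by rw [hCgdef]
  -- integrability of g - ℓ on (0, ρ)
  have hG_int : IntegrableOn (fun y => g y - (a*y + b)) (Set.Ioo (0:ℝ) ρ) := by
    refine Integrable.mono' (g := fun _ => Cg)
      ((integrableOn_const_iff (C := Cg)).mpr (Or.inr (by simp [Real.volume_Ioo])))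
      ((hgcont.sub (by fun_prop)).aestronglyMeasurable measurableSet_Ioo) ?_
    refine (ae_restrict_iff' measurableSet_Ioo).mpr (Filter.Eventually.of_forall fun y hy => ?_)
    exact hGbdd y hy
  -- integrability of v - g on (0, ρ)
  have hvg_int : IntegrableOn (fun y => v y - g y) (Set.Ioo (0:ℝ) ρ) := by
    refine Integrable.mono' hslice_fn_int
      ((hvcont.sub hgcont).aestronglyMeasurable measurableSet_Ioo) ?_
    filter_upwards [hvg_ae] with y hy using hy
  -- integrability of v - ℓ on (0, ρ)
  have hvl_int : IntegrableOn (fun y => v y - a*y - b) (Set.Ioo (0:ℝ) ρ) := by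
    refine (hvg_int.add hG_int).congr ?_
    exact Filter.Eventually.of_forall fun y => by simp; ring
  set F := ∫ y in Set.Ioo (0:ℝ) ρ, |v y - a*y - b| with hFdef
  have hF0 : 0 ≤ F := integral_nonneg fun y => abs_nonneg _
  -- bound ∫ |v - g|
  have hvgle : ∫ y in Set.Ioo (0:ℝ) ρ, |v y - g y| ≤ ε/2 * ρ^2 + E/(2*ε) := by
    calc ∫ y in Set.Ioo (0:ℝ) ρ, |v y - g y|
        ≤ ∫ y in Set.Ioo (0:ℝ) ρ, ∫ t in Set.Ioo x₁ (0:ℝ), h (t, y) :=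
          integral_mono_ae hvg_int.abs hslice_fn_int hvg_ae
      _ = ∫ x in R, h x := hswap.symm
      _ ≤ ε/2 * ρ^2 + E/(2*ε) := hIR
  -- J = ∫ |g - ℓ| and its upper bound
  set J := ∫ y in Set.Ioo (0:ℝ) ρ, |g y - (a*y + b)| with hJdef
  have hJle : J ≤ F + (ε/2 * ρ^2 + E/(2*ε)) := by
    have htri : ∫ y in Set.Ioo (0:ℝ) ρ, |g y - (a*y + b)|
        ≤ ∫ y in Set.Ioo (0:ℝ) ρ, (|v y - a*y - b| + |v y - g y|) := by
      refine setIntegral_mono_on hG_int.abs (hvl_int.abs.add hvg_int.abs)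
        measurableSet_Ioo fun y _ => ?_
      have : g y - (a*y + b) = (v y - a*y - b) - (v y - g y) := by ring
      rw [this]
      exact abs_sub _ _
    rw [integral_add hvl_int.abs hvg_int.abs] at htri
    exact htri.trans (by linarith)
  -- the two subintervals
  set I₁ := Set.Ioo (ρ/8) (ρ/4) with hI₁def
  set I₂ := Set.Ioo (3*ρ/4) (7*ρ/8) with hI₂def
  have hI₁sub : I₁ ⊆ Set.Ioo (0:ℝ) ρ := fun t ht => ⟨by linarith [ht.1], by linarith [ht.2]⟩
  have hI₂sub : I₂ ⊆ Set.Ioo (0:ℝ) ρ := fun t ht => ⟨by linarith [ht.1], by linarith [ht.2]⟩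
  have hGint₁ : IntegrableOn (fun y => |g y - (a*y + b)|) I₁ := (hG_int.mono_set hI₁sub).abs
  have hGint₂ : IntegrableOn (fun y => |g y - (a*y + b)|) I₂ := (hG_int.mono_set hI₂sub).abs
  have hvol₁ : ((volume : Measure ℝ) I₁).toReal = ρ/8 := by
    rw [hI₁def, Real.volume_Ioo, ENNReal.toReal_ofReal (by linarith)]; ring
  have hvol₂ : ((volume : Measure ℝ) I₂).toReal = ρ/8 := by
    rw [hI₂def, Real.volume_Ioo, ENNReal.toReal_ofReal (by linarith)]; ring
  -- pointwise lower bound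
  have hpoint : ∀ y₁ ∈ I₁, ∀ y₂ ∈ I₂,
      A*ρ/2 - K ≤ |g y₁ - (a*y₁ + b)| + |g y₂ - (a*y₂ + b)| := by
    intro y₁ hy₁ y₂ hy₂
    have h12 : y₁ ≤ y₂ := by linarith [hy₁.2, hy₂.1]
    have hosc12 : |g y₂ - g y₁| ≤ K := hosc y₁ (hI₁sub hy₁) y₂ (hI₂sub hy₂) h12
    have hgap : ρ/2 ≤ y₂ - y₁ := by linarith [hy₁.2, hy₂.1]
    have he : a*(y₂ - y₁) = (g y₂ - g y₁) - ((g y₂ - (a*y₂ + b)) - (g y₁ - (a*y₁ + b))) := by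
      ring
    have h1 : |a*(y₂ - y₁)| ≤ |g y₂ - g y₁|
        + (|g y₂ - (a*y₂ + b)| + |g y₁ - (a*y₁ + b)|) := by
      rw [he]
      calc |(g y₂ - g y₁) - ((g y₂ - (a*y₂ + b)) - (g y₁ - (a*y₁ + b)))|
          ≤ |g y₂ - g y₁| + |(g y₂ - (a*y₂ + b)) - (g y₁ - (a*y₁ + b))| := abs_sub _ _
        _ ≤ |g y₂ - g y₁| + (|g y₂ - (a*y₂ + b)| + |g y₁ - (a*y₁ + b)|) := by
            have := abs_sub (g y₂ - (a*y₂ + b)) (g y₁ - (a*y₁ + b))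
            linarith
    have h2 : A*(ρ/2) ≤ |a*(y₂ - y₁)| := by
      rw [abs_mul, abs_of_nonneg (by linarith : (0:ℝ) ≤ y₂ - y₁)]
      have := mul_le_mul_of_nonneg_left hgap hA.le
      linarith
    linarith
  -- inner integral over I₂
  have hinner : ∀ y₁ ∈ I₁,
      (ρ/8) * (A*ρ/2 - K) ≤ (ρ/8) * |g y₁ - (a*y₁ + b)| + ∫ y in I₂, |g y - (a*y + b)| := by
    intro y₁ hy₁
    have hmono := setIntegral_mono_on
      (f := fun _ => A*ρ/2 - K) (g := fun y₂ => |g y₁ - (a*y₁ + b)| + |g y₂ - (a*y₂ + b)|)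
      ((integrableOn_const_iff (C := A*ρ/2 - K)).mpr (Or.inr (by simp [hI₂def, Real.volume_Ioo])))
      (((integrableOn_const_iff (C := |g y₁ - (a*y₁ + b)|)).mpr
        (Or.inr (by simp [hI₂def, Real.volume_Ioo]))).add hGint₂)
      measurableSet_Ioo (fun y₂ hy₂ => hpoint y₁ hy₁ y₂ hy₂)
    rw [setIntegral_const, measureReal_def, integral_add ((integrableOn_const_iff
        (C := |g y₁ - (a*y₁ + b)|)).mpr (Or.inr (by simp [hI₂def, Real.volume_Ioo]))) hGint₂,
      setIntegral_const, measureReal_def, smul_eq_mul, smul_eq_mul, hvol₂] at hmono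
    linarith
  -- outer integral over I₁
  have houter : (ρ/8) * ((ρ/8) * (A*ρ/2 - K) - ∫ y in I₂, |g y - (a*y + b)|)
      ≤ (ρ/8) * ∫ y in I₁, |g y - (a*y + b)| := by
    have hmono := setIntegral_mono_on
      (f := fun _ => (ρ/8) * (A*ρ/2 - K) - ∫ y in I₂, |g y - (a*y + b)|)
      (g := fun y₁ => (ρ/8) * |g y₁ - (a*y₁ + b)|)
      ((integrableOn_const_iff (C := (ρ/8) * (A*ρ/2 - K) - ∫ y in I₂, |g y - (a*y + b)|)).mpr
        (Or.inr (by simp [hI₁def, Real.volume_Ioo])))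
      (hGint₁.const_mul _) measurableSet_Ioo (fun y₁ hy₁ => by linarith [hinner y₁ hy₁])
    rw [setIntegral_const, measureReal_def, smul_eq_mul, hvol₁, integral_const_mul] at hmono
    exact hmono
  have hmain : (ρ/8) * (A*ρ/2 - K) ≤ 2 * J := by
    have hdiv : (ρ/8) * (A*ρ/2 - K) - (∫ y in I₂, |g y - (a*y + b)|)
        ≤ ∫ y in I₁, |g y - (a*y + b)| :=
      le_of_mul_le_mul_left (by linarith [houter]) (by linarith : (0:ℝ) < ρ/8)
    have hs₁ : ∫ y in I₁, |g y - (a*y + b)| ≤ J :=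
      setIntegral_mono_set hG_int.abs (Filter.Eventually.of_forall fun y => abs_nonneg _)
        (HasSubset.Subset.eventuallyLE hI₁sub)
    have hs₂ : ∫ y in I₂, |g y - (a*y + b)| ≤ J :=
      setIntegral_mono_set hG_int.abs (Filter.Eventually.of_forall fun y => abs_nonneg _)
        (HasSubset.Subset.eventuallyLE hI₂sub)
    linarith
  -- put everything together
  have hKle : K ≤ ε*ρ/2 + E/(ρ*ε) := by
    have h1 : e₁/(2*ε) ≤ (2*E/ρ)/(2*ε) := by gcongr
    have h2 : (2*E/ρ)/(2*ε) = E/(ρ*ε) := by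
      field_simp
    rw [hKdef]
    linarith
  have hmain2 : (ρ/8) * (A*ρ/2 - (ε*ρ/2 + E/(ρ*ε))) ≤ 2*F + ε*ρ^2 + E/ε := by
    have hstep : (ρ/8) * (A*ρ/2 - (ε*ρ/2 + E/(ρ*ε))) ≤ (ρ/8) * (A*ρ/2 - K) := by
      have := mul_le_mul_of_nonneg_left (by linarith [hKle] : A*ρ/2 - (ε*ρ/2 + E/(ρ*ε)) ≤ A*ρ/2 - K)
        (by linarith : (0:ℝ) ≤ ρ/8)
      linarith
    calc (ρ/8) * (A*ρ/2 - (ε*ρ/2 + E/(ρ*ε))) ≤ (ρ/8) * (A*ρ/2 - K) := hstep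
      _ ≤ 2 * J := hmain
      _ ≤ 2 * (F + (ε/2 * ρ^2 + E/(2*ε))) := by linarith
      _ = 2*F + ε*ρ^2 + E/ε := by ring
  have hfinal : 1/4096 * ρ^2 * a^2 - A*F ≤ E := by
    have hmul := mul_le_mul_of_nonneg_left hmain2 hA.le
    rw [hεdef] at hmul
    have lhs_eq : A * ((ρ/8) * (A*ρ/2 - ((A/34)*ρ/2 + E/(ρ*(A/34)))))
        = A^2*ρ^2/16 - A^2*ρ^2/544 - 17*E/4 := by
      field_simp
      ring
    have rhs_eq : A * (2*F + (A/34)*ρ^2 + E/(A/34)) = 2*A*F + A^2*ρ^2/34 + 34*E := by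
      field_simp
    rw [lhs_eq, rhs_eq] at hmul
    have hA2 : A^2*ρ^2 = a^2*ρ^2 := by rw [sq_abs]
    nlinarith [hmul, hF0, hE0, mul_nonneg hA.le hF0]
  calc ENNReal.ofReal (1/4096 * ρ^2 * a^2 - A * F)
      ≤ ENNReal.ofReal E := ENNReal.ofReal_le_ofReal (by linarith [hfinal])
    _ = Etot := by rw [hEdef']; exact ENNReal.ofReal_toReal hEtop'

/-- Lemma 2.3 of the paper (a variant of Lemma 2 in [Conti '06]): there is `c > 0` such
that for all `ρ > 0`, all `v ∈ H^{1/2}((0,ρ))`, and all `a b : ℝ`,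
`c ρ² a² ≤ |a| ∫₀^ρ |v(y) - a y - b| dy + [v]²_{H^{1/2}((0,ρ))}`. -/
theorem h_half_seminorm_lower_bound :
    ∃ c : ℝ, 0 < c ∧ ∀ ρ : ℝ, 0 < ρ → ∀ v : ℝ → ℝ, H12sq ρ v ≠ ⊤ →
      ∀ a b : ℝ,
        c * ρ ^ 2 * a ^ 2 ≤
          |a| * (∫ y in Set.Ioo (0 : ℝ) ρ, |v y - a * y - b|) + (H12sq ρ v).toReal := by
  refine ⟨1/4096, by norm_num, ?_⟩
  intro ρ hρ v hT a b
  have hF0 : 0 ≤ ∫ y in Set.Ioo (0:ℝ) ρ, |v y - a * y - b| :=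
    integral_nonneg fun y => abs_nonneg _
  have key : ENNReal.ofReal (1/4096 * ρ^2 * a^2
      - |a| * ∫ y in Set.Ioo (0:ℝ) ρ, |v y - a * y - b|) ≤ H12sq ρ v := by
    rw [H12sq]
    refine le_iInf fun w => le_iInf fun hc => le_iInf fun hd => le_iInf fun hb => ?_
    exact h12_core ρ hρ a b v w hc hd hb
  have h2 := (ENNReal.ofReal_le_iff_le_toReal hT).mp key
  linarith
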